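/- Consider the ODE system s_i'(t) = −(1/y_i) F(s(t)) x(t) for i = 1,…,n and x'(t) = (−D + F(s(t))) x(t). For every solution (s(t), x(t)) with initial condition in the open positive cone ℝ₊^{n+1}, the biomass x(t) tends to 0 as t → ∞. -/

import Mathlib

open Filter Set Topology

noncomputable section

/-- Hypotheses on the uptake function `F`: Lipschitz on the closed positive cone,
vanishing when some nutrient is exhausted, positive on the open positive cone, and
strictly increasing in each argument on the positive cone. -/
def FHyp {n : ℕ} (F : (Fin n → ℝ) → ℝ) : Prop :=
  (∃ K : NNReal, LipschitzOnWith K F {s : Fin n → ℝ | ∀ i, 0 ≤ s i}) ∧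
  (∀ s : Fin n → ℝ, (∀ i, 0 ≤ s i) → (∃ i, s i = 0) → F s = 0) ∧
  (∀ s : Fin n → ℝ, (∀ i, 0 < s i) → 0 < F s) ∧
  (∀ s : Fin n → ℝ, (∀ i, 0 < s i) → ∀ i : Fin n, ∀ ε : ℝ, 0 < ε →
    F s < F (Function.update s i (s i + ε)))

/-- The component Lyapunov-like function `V_i(s) = y₁(s₁ⁱⁿ - s₁) - y_i(s_iⁱⁿ - s_i)`. -/
def Vfun {n : ℕ} [NeZero n] (y sIn : Fin n → ℝ) (i : Fin n) (s : Fin n → ℝ) : ℝ :=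
  y 0 * (sIn 0 - s 0) - y i * (sIn i - s i)

/-- `V̄_i = y₁(s₁ⁱⁿ - s̄₁) - y_i s_iⁱⁿ`. -/
def Vbar {n : ℕ} [NeZero n] (y sIn : Fin n → ℝ) (sbar1 : ℝ) (i : Fin n) : ℝ :=
  y 0 * (sIn 0 - sbar1) - y i * sIn i

/-- `Ω₀ = {s ∈ ℝⁿ₊ : s₁ ≥ s̄₁, V_i(s) < V̄_i for at least one i = 2,…,n}`. -/
def Omega0 {n : ℕ} [NeZero n] (y sIn : Fin n → ℝ) (sbar1 : ℝ) : Set (Fin n → ℝ) :=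
  {s | (∀ i, 0 < s i) ∧ sbar1 ≤ s 0 ∧ ∃ i, i ≠ 0 ∧ Vfun y sIn i s < Vbar y sIn sbar1 i}

/-- `Ω₁ = {s ∈ ℝⁿ₊ : s₁ ≥ s̄₁, V_i(s) > V̄_i for all i = 2,…,n}`. -/
def Omega1 {n : ℕ} [NeZero n] (y sIn : Fin n → ℝ) (sbar1 : ℝ) : Set (Fin n → ℝ) :=
  {s | (∀ i, 0 < s i) ∧ sbar1 ≤ s 0 ∧ ∀ i, i ≠ 0 → Vbar y sIn sbar1 i < Vfun y sIn i s}

/-- `φ_ν(s⁰) = s⁰ - ν y₁ (s₁⁰ - s̄₁) Y`, with `Y = (1/y₁, …, 1/yₙ)`. -/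
def phiNu {n : ℕ} [NeZero n] (y : Fin n → ℝ) (sbar1 ν : ℝ) (s0 : Fin n → ℝ) : Fin n → ℝ :=
  fun i => s0 i - ν * (y 0 * (s0 0 - sbar1)) * (1 / y i)

/-- `I(s⁰) = y₁ (s₁⁰ - s̄₁) ∫₀¹ (1 - D / F(φ_ν(s⁰))) dν`, the net biomass change over one cycle. -/
def Ifun {n : ℕ} [NeZero n] (F : (Fin n → ℝ) → ℝ) (D : ℝ) (y : Fin n → ℝ)
    (sbar1 : ℝ) (s0 : Fin n → ℝ) : ℝ :=
  y 0 * (s0 0 - sbar1) * ∫ ν in (0:ℝ)..1, (1 - D / F (phiNu y sbar1 ν s0))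

/-- `ŝ⁺(r) = sⁱⁿ - (1 - r) y₁ (s₁ⁱⁿ - s̄₁) Y`. -/
def shatP {n : ℕ} [NeZero n] (y sIn : Fin n → ℝ) (sbar1 r : ℝ) : Fin n → ℝ :=
  fun i => sIn i - (1 - r) * (y 0 * (sIn 0 - sbar1)) * (1 / y i)

/-- `μ(r) = y₁ (s̄₁⁺ - s̄₁) ∫₀¹ (1 - D / F(φ_ν(ŝ⁺(r)))) dν`, where `s̄₁⁺ = r s₁ⁱⁿ + (1-r) s̄₁`. -/
def muFun {n : ℕ} [NeZero n] (F : (Fin n → ℝ) → ℝ) (D : ℝ) (y sIn : Fin n → ℝ)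
    (sbar1 r : ℝ) : ℝ :=
  y 0 * ((r * sIn 0 + (1 - r) * sbar1) - sbar1) *
    ∫ ν in (0:ℝ)..1, (1 - D / F (phiNu y sbar1 ν (shatP y sIn sbar1 r)))

/-- `Γ_ρ⁺ = {s ∈ ℝⁿ₊ : s₁ = s̄₁⁺, V_i(s) > -ρ for all i = 2,…,n}`. -/
def GammaRho {n : ℕ} [NeZero n] (y sIn : Fin n → ℝ) (sbar1 r ρ : ℝ) : Set (Fin n → ℝ) :=
  {s | (∀ i, 0 < s i) ∧ s 0 = r * sIn 0 + (1 - r) * sbar1 ∧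
    ∀ i, i ≠ 0 → -ρ < Vfun y sIn i s}

/-- `Ω^ρ = {s ∈ Ω₁ : V_i(s) > -ρ for all i = 2,…,n}`. -/
def OmegaRho {n : ℕ} [NeZero n] (y sIn : Fin n → ℝ) (sbar1 ρ : ℝ) : Set (Fin n → ℝ) :=
  {s | s ∈ Omega1 y sIn sbar1 ∧ ∀ i, i ≠ 0 → -ρ < Vfun y sIn i s}

/-- The cycle map `s ↦ g(φ₁(s)) = r sⁱⁿ + (1 - r) φ₁(s)`. -/
def cycMap {n : ℕ} [NeZero n] (y sIn : Fin n → ℝ) (sbar1 r : ℝ)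
    (s : Fin n → ℝ) : Fin n → ℝ :=
  fun i => r * sIn i + (1 - r) * phiNu y sbar1 1 s i

/-- A (right-continuous) solution of the impulsive self-cycling fermentation model
`eq:model`: between impulse times the ODEs hold, impulse times are exactly the times
where the left limit of `s₁` equals the threshold `s̄₁`, and at an impulse time the
state jumps according to the decanting/refilling map. -/
structure SCFSol (n : ℕ) [NeZero n] (F : (Fin n → ℝ) → ℝ) (D : ℝ) (y : Fin n → ℝ)
    (r : ℝ) (sIn : Fin n → ℝ) (sbar1 : ℝ) where
  /-- nutrient concentrations -/
  s : ℝ → Fin n → ℝ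
  /-- biomass concentration -/
  x : ℝ → ℝ
  /-- the set of impulse times -/
  T : Set ℝ
  /-- left limits of `s` (meaningful at impulse times) -/
  sLim : ℝ → Fin n → ℝ
  /-- left limit of `x` (meaningful at impulse times) -/
  xLim : ℝ → ℝ
  T_pos : ∀ t ∈ T, 0 < t
  init : sbar1 < s 0 0
  ode_s : ∀ t : ℝ, 0 ≤ t → t ∉ T → ∀ i,
    HasDerivAt (fun τ => s τ i) (-(1 / y i) * F (s t) * x t) t
  ode_x : ∀ t : ℝ, 0 ≤ t → t ∉ T →
    HasDerivAt x ((-D + F (s t)) * x t) t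
  left_s : ∀ t ∈ T, ∀ i,
    Filter.Tendsto (fun τ => s τ i) (nhdsWithin t (Set.Iio t)) (nhds (sLim t i))
  left_x : ∀ t ∈ T, Filter.Tendsto x (nhdsWithin t (Set.Iio t)) (nhds (xLim t))
  hit : ∀ t ∈ T, sLim t 0 = sbar1
  exact_hit : ∀ t : ℝ, 0 < t → t ∉ T → s t 0 ≠ sbar1
  jump_s : ∀ t ∈ T, ∀ i, s t i = r * sIn i + (1 - r) * sLim t i
  jump_x : ∀ t ∈ T, x t = (1 - r) * xLim t

/-- Convergence of a solution to the unique periodic orbit: there are infinitely many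
impulses and, along the (increasing) enumeration of the impulse times, the post-impulse
nutrient states converge to `ŝ⁺(r)`, the post-impulse biomass converges to
`((1-r)/r) μ(r)`, and the pre-impulse biomass converges to `(1/r) μ(r)`. -/
def ConvergesToPeriodic {n : ℕ} [NeZero n] {F : (Fin n → ℝ) → ℝ} {D : ℝ}
    {y : Fin n → ℝ} {r : ℝ} {sIn : Fin n → ℝ} {sbar1 : ℝ}
    (sol : SCFSol n F D y r sIn sbar1) : Prop :=
  sol.T.Infinite ∧
  ∀ tk : ℕ → ℝ, StrictMono tk → Set.range tk = sol.T →
    (∀ i, Filter.Tendsto (fun k => sol.s (tk k) i) Filter.atTop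
      (nhds (shatP y sIn sbar1 r i))) ∧
    Filter.Tendsto (fun k => sol.x (tk k)) Filter.atTop
      (nhds ((1 - r) / r * muFun F D y sIn sbar1 r)) ∧
    Filter.Tendsto (fun k => sol.xLim (tk k)) Filter.atTop
      (nhds (1 / r * muFun F D y sIn sbar1 r))


lemma grow_aux {f f' : ℝ → ℝ} {a b : ℝ} (hab : a ≤ b)
    (hd : ∀ t ∈ Set.Icc a b, HasDerivAt f (f' t) t)
    (h0 : ∀ t ∈ Set.Ioo a b, 0 ≤ f' t) : f a ≤ f b := by
  have hc : ContinuousOn f (Set.Icc a b) := fun t ht =>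
    (hd t ht).continuousAt.continuousWithinAt
  have hmono := monotoneOn_of_deriv_nonneg (convex_Icc a b) hc
    (fun t ht => by
      rw [interior_Icc] at ht
      exact (hd t (Set.Ioo_subset_Icc_self ht)).differentiableAt.differentiableWithinAt)
    (fun t ht => by
      rw [interior_Icc] at ht
      rw [(hd t (Set.Ioo_subset_Icc_self ht)).deriv]
      exact h0 t ht)
  exact hmono (Set.left_mem_Icc.2 hab) (Set.right_mem_Icc.2 hab) hab

lemma decay_aux {f f' : ℝ → ℝ} {a b : ℝ} (hab : a ≤ b)
    (hd : ∀ t ∈ Set.Icc a b, HasDerivAt f (f' t) t)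
    (h0 : ∀ t ∈ Set.Ioo a b, f' t ≤ 0) : f b ≤ f a := by
  have := grow_aux (f := fun t => -f t) (f' := fun t => -f' t) hab
    (fun t ht => (hd t ht).neg) (fun t ht => neg_nonneg.2 (h0 t ht))
  simpa using this

lemma lim_aux {f : ℝ → ℝ} {c : ℝ}
    (hmono : ∀ a b : ℝ, 0 ≤ a → a ≤ b → f b ≤ f a)
    (hlb : ∀ t : ℝ, 0 ≤ t → c ≤ f t) :
    ∃ l, c ≤ l ∧ Filter.Tendsto f Filter.atTop (nhds l) := by
  set Sset := f '' Set.Ici (0:ℝ) with hS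
  have hne : Sset.Nonempty := ⟨f 0, ⟨0, Set.self_mem_Ici, rfl⟩⟩
  have hbdd : BddBelow Sset := ⟨c, fun v hv => by
    obtain ⟨t, ht, rfl⟩ := hv; exact hlb t ht⟩
  refine ⟨sInf Sset, le_csInf hne (fun v hv => by
    obtain ⟨t, ht, rfl⟩ := hv; exact hlb t ht), ?_⟩
  rw [Metric.tendsto_atTop]
  intro ε hε
  obtain ⟨v, hv, hvlt⟩ := (csInf_lt_iff hbdd hne).1 (by linarith : sInf Sset < sInf Sset + ε)
  obtain ⟨t0, ht0, rfl⟩ := hv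
  refine ⟨t0, fun t ht => ?_⟩
  have h2 : f t ≤ f t0 := hmono t0 t ht0 ht
  have h3 : sInf Sset ≤ f t := csInf_le hbdd ⟨t, Set.mem_Ici.2 (le_trans ht0 ht), rfl⟩
  rw [Real.dist_eq, abs_lt]
  constructor <;> linarith


/-- Lemma 2.1, second part: along every solution of the limiting ODE
system with initial condition in the open positive cone, the biomass tends to `0`. -/
theorem scf_ode_biomass_tendsto_zero {n : ℕ} [NeZero n] (F : (Fin n → ℝ) → ℝ) (hF : FHyp F)
    (D : ℝ) (hD : 0 < D) (y : Fin n → ℝ) (hy : ∀ i, 0 < y i)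
    (s : ℝ → Fin n → ℝ) (x : ℝ → ℝ)
    (hode_s : ∀ t : ℝ, 0 ≤ t → ∀ i,
      HasDerivAt (fun τ => s τ i) (-(1 / y i) * F (s t) * x t) t)
    (hode_x : ∀ t : ℝ, 0 ≤ t → HasDerivAt x ((-D + F (s t)) * x t) t)
    (hinit : (∀ i, 0 < s 0 i) ∧ 0 < x 0) :
    Filter.Tendsto x Filter.atTop (nhds 0) := by
  obtain ⟨⟨K, hK⟩, hzero, hFpos, -⟩ := hF
  obtain ⟨hs0, hx0⟩ := hinit
  have hy0 : y 0 ≠ 0 := (hy 0).ne'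
  -- continuity
  have hxc : ∀ t : ℝ, 0 ≤ t → ContinuousAt x t := fun t ht => (hode_x t ht).continuousAt
  have hsc : ∀ t : ℝ, 0 ≤ t → ∀ i, ContinuousAt (fun τ => s τ i) t :=
    fun t ht i => (hode_s t ht i).continuousAt
  set W : ℝ → ℝ := fun t => y 0 * s t 0 + x t with hWdef
  set M : ℝ := y 0 * s 0 0 + x 0 with hMdef
  have hMpos : 0 < M := by have := mul_pos (hy 0) (hs0 0); simp only [hMdef]; linarith
  have hWd : ∀ t : ℝ, 0 ≤ t → HasDerivAt W (-D * x t) t := by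
    intro t ht
    have h := ((hode_s t ht 0).const_mul (y 0)).add (hode_x t ht)
    have heq : -D * x t = y 0 * (-(1 / y 0) * F (s t) * x t) + (-D + F (s t)) * x t := by
      field_simp
      ring
    rw [heq]
    exact h
  -- Part 1: positivity for all t ≥ 0
  have key : ∀ T : ℝ, 0 < T → (∀ t, 0 ≤ t → t < T → (∀ i, 0 < s t i) ∧ 0 < x t) →
      (∀ i, 0 < s T i) ∧ 0 < x T := by
    intro T hT hgd
    -- W decreasing up to T, hence x bounded by M
    have hWle : ∀ t, 0 ≤ t → t ≤ T → W t ≤ M := by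
      intro t ht htT
      have : W t ≤ W 0 := decay_aux ht (fun u hu => hWd u hu.1)
        (fun u hu => by
          have hxu : 0 < x u := (hgd u hu.1.le (lt_of_lt_of_le hu.2 htT)).2
          nlinarith)
      simpa using this
    have hxM : ∀ t, 0 ≤ t → t < T → x t ≤ M := by
      intro t ht htT
      have h1 : 0 < y 0 * s t 0 := mul_pos (hy 0) ((hgd t ht htT).1 0)
      have h2 : W t ≤ M := hWle t ht htT.le
      simp only [hWdef] at h2
      linarith
    -- Lipschitz bound : F (s t) ≤ K * s t i
    have hFle : ∀ t, 0 ≤ t → t < T → ∀ i, F (s t) ≤ K * s t i := by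
      intro t ht htT i
      have hsp := (hgd t ht htT).1
      have mem1 : ∀ j, 0 ≤ s t j := fun j => (hsp j).le
      set u : Fin n → ℝ := Function.update (s t) i 0 with hudef
      have mem2 : ∀ j, 0 ≤ u j := by
        intro j
        rcases eq_or_ne j i with rfl | hne
        · simp [hudef]
        · simp [hudef, Function.update_of_ne hne]; exact mem1 j
      have hFu : F u = 0 := hzero u mem2 ⟨i, by simp [hudef]⟩
      have hdist : dist (s t) u ≤ s t i := by
        refine (dist_pi_le_iff (mem1 i)).2 (fun j => ?_)
        rcases eq_or_ne j i with rfl | hne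
        · simp [hudef, Real.dist_eq, abs_of_nonneg (mem1 j)]
        · simp [hudef, Function.update_of_ne hne, dist_self]; exact mem1 i
      calc F (s t) = F (s t) - F u := by rw [hFu]; ring
        _ ≤ |F (s t) - F u| := le_abs_self _
        _ = dist (F (s t)) (F u) := (Real.dist_eq _ _).symm
        _ ≤ K * dist (s t) u := hK.dist_le_mul (s t) mem1 u mem2
        _ ≤ K * s t i := mul_le_mul_of_nonneg_left hdist K.coe_nonneg
    constructor
    · -- each s T i > 0 via Gronwall
      intro i
      set C : ℝ := K * M / y i with hCdef
      have hGle : s 0 i * Real.exp (C * 0) ≤ s T i * Real.exp (C * T) := by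
        refine grow_aux (f := fun t => s t i * Real.exp (C * t))
          (f' := fun t => (-(1 / y i) * F (s t) * x t) * Real.exp (C * t)
            + s t i * (Real.exp (C * t) * (C * 1))) hT.le ?_ ?_
        · intro t ht
          exact (hode_s t ht.1 i).mul (((hasDerivAt_id t).const_mul C).exp)
        · intro t ht
          have hsp := (hgd t ht.1.le ht.2).1
          have hxp := (hgd t ht.1.le ht.2).2
          have hE := Real.exp_pos (C * t)
          have key1 : F (s t) * x t ≤ K * M * s t i := by
            have h1 : F (s t) * x t ≤ (K * s t i) * M :=
              mul_le_mul (hFle t ht.1.le ht.2 i) (hxM t ht.1.le ht.2) hxp.le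
                (mul_nonneg K.coe_nonneg (hsp i).le)
            linarith [h1, (by ring : (K : ℝ) * s t i * M = K * M * s t i)]
          have h4 : (1 / y i) * (K * M * s t i) = s t i * C := by
            rw [hCdef]; field_simp [(hy i).ne']
          have h3 : (1 / y i) * (F (s t) * x t) ≤ (1 / y i) * (K * M * s t i) :=
            mul_le_mul_of_nonneg_left key1 (one_div_nonneg.2 (hy i).le)
          have h2 : 0 ≤ s t i * C - 1 / y i * F (s t) * x t := by
            rw [← h4] at *
            linarith [h3, mul_assoc (1 / y i) (F (s t)) (x t)]
          have hexp : (-(1 / y i) * F (s t) * x t) * Real.exp (C * t)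
              + s t i * (Real.exp (C * t) * (C * 1))
              = Real.exp (C * t) * (s t i * C - 1 / y i * F (s t) * x t) := by ring
          exact le_of_le_of_eq (mul_nonneg hE.le h2) hexp.symm
      simp only [mul_zero, Real.exp_zero, mul_one] at hGle
      nlinarith [Real.exp_pos (C * T), hs0 i]
    · -- x T > 0 via Gronwall
      have hHle : x 0 * Real.exp (D * 0) ≤ x T * Real.exp (D * T) := by
        refine grow_aux (f := fun t => x t * Real.exp (D * t))
          (f' := fun t => ((-D + F (s t)) * x t) * Real.exp (D * t)
            + x t * (Real.exp (D * t) * (D * 1))) hT.le ?_ ?_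
        · intro t ht
          exact (hode_x t ht.1).mul (((hasDerivAt_id t).const_mul D).exp)
        · intro t ht
          have hsp := (hgd t ht.1.le ht.2).1
          have hxp := (hgd t ht.1.le ht.2).2
          have hE := Real.exp_pos (D * t)
          have hFp := hFpos (s t) hsp
          have hexp : ((-D + F (s t)) * x t) * Real.exp (D * t)
              + x t * (Real.exp (D * t) * (D * 1))
              = Real.exp (D * t) * (F (s t) * x t) := by ring
          exact le_of_le_of_eq (mul_nonneg hE.le (mul_nonneg hFp.le hxp.le)) hexp.symm
      simp only [mul_zero, Real.exp_zero, mul_one] at hHle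
      nlinarith [Real.exp_pos (D * T)]
  have hposall : ∀ t : ℝ, 0 ≤ t → (∀ i, 0 < s t i) ∧ 0 < x t := by
    by_contra hbad
    obtain ⟨t0, ht0'⟩ := not_forall.1 hbad
    obtain ⟨ht0, hng⟩ := Classical.not_imp.1 ht0'
    set S : Set ℝ := {t : ℝ | 0 ≤ t ∧ ¬ ((∀ i, 0 < s t i) ∧ 0 < x t)} with hSdef
    have hSne : S.Nonempty := ⟨t0, ht0, hng⟩
    have hSbdd : BddBelow S := ⟨0, fun u hu => hu.1⟩
    set T := sInf S with hTdef
    have hT0 : 0 ≤ T := le_csInf hSne (fun u hu => hu.1)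
    have hTbad : ¬ ((∀ i, 0 < s T i) ∧ 0 < x T) := by
      intro hgT
      have h1 : ∀ᶠ u in nhds T, ∀ i, 0 < s u i :=
        eventually_all.2 fun i =>
          (hsc T hT0 i).preimage_mem_nhds (Ioi_mem_nhds (hgT.1 i))
      have h2 : ∀ᶠ u in nhds T, 0 < x u :=
        (hxc T hT0).preimage_mem_nhds (Ioi_mem_nhds hgT.2)
      obtain ⟨δ, hδ, hball⟩ := Metric.eventually_nhds_iff.1 (h1.and h2)
      have hlb : ∀ u ∈ S, T + δ ≤ u := by
        intro u hu
        have hTu : T ≤ u := csInf_le hSbdd hu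
        by_contra hlt
        push_neg at hlt
        have : dist u T < δ := by rw [Real.dist_eq, abs_of_nonneg (by linarith)]; linarith
        exact hu.2 (hball this)
      have := le_csInf hSne hlb
      rw [← hTdef] at this
      linarith
    have hTpos : 0 < T := by
      rcases lt_or_eq_of_le hT0 with h | h
      · exact h
      · exact absurd (h ▸ ⟨hs0, hx0⟩ : (∀ i, 0 < s T i) ∧ 0 < x T) hTbad
    refine hTbad (key T hTpos (fun t ht htT => ?_))
    by_contra hng2
    exact absurd (csInf_le hSbdd ⟨ht, hng2⟩) (not_le.2 htT)
  -- Part 2: convergence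
  set m : ℝ → ℝ := fun t => y 0 * s t 0 with hmdef
  have hmd : ∀ t : ℝ, 0 ≤ t → HasDerivAt m (y 0 * (-(1 / y 0) * F (s t) * x t)) t :=
    fun t ht => (hode_s t ht 0).const_mul (y 0)
  have hWanti : ∀ a b : ℝ, 0 ≤ a → a ≤ b → W b ≤ W a := by
    intro a b ha hab
    refine decay_aux hab (fun t ht => hWd t (le_trans ha ht.1)) (fun t ht => ?_)
    have hxp := (hposall t (le_trans ha ht.1.le)).2
    nlinarith
  have hmanti : ∀ a b : ℝ, 0 ≤ a → a ≤ b → m b ≤ m a := by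
    intro a b ha hab
    refine decay_aux hab (fun t ht => hmd t (le_trans ha ht.1)) (fun t ht => ?_)
    have ht' : 0 ≤ t := le_trans ha ht.1.le
    have hxp := (hposall t ht').2
    have hFp := hFpos (s t) (hposall t ht').1
    have h1 : 0 < 1 / y 0 * F (s t) * x t :=
      mul_pos (mul_pos (one_div_pos.2 (hy 0)) hFp) hxp
    nlinarith [hy 0]
  have hWlb : ∀ t : ℝ, 0 ≤ t → (0:ℝ) ≤ W t := by
    intro t ht
    have h1 := mul_pos (hy 0) ((hposall t ht).1 0)
    have h2 := (hposall t ht).2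
    simp only [hWdef]; linarith
  have hmlb : ∀ t : ℝ, 0 ≤ t → (0:ℝ) ≤ m t := fun t ht =>
    (mul_pos (hy 0) ((hposall t ht).1 0)).le
  obtain ⟨A, hA0, hWlim⟩ := lim_aux hWanti hWlb
  obtain ⟨L, hL0, hmlim⟩ := lim_aux hmanti hmlb
  have hfun : (fun t => W t - m t) = x := funext fun t => by
    simp only [hWdef, hmdef]; ring
  have hxlim : Filter.Tendsto x Filter.atTop (nhds (A - L)) := by
    rw [← hfun]; exact hWlim.sub hmlim
  clear_value W m
  have hl0 : 0 ≤ A - L :=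
    ge_of_tendsto hxlim (Filter.eventually_atTop.2 ⟨0, fun t ht => (hposall t ht).2.le⟩)
  have hl : A - L = 0 := by
    by_contra hne
    have hl : 0 < A - L := lt_of_le_of_ne hl0 (Ne.symm hne)
    set l := A - L with hldef
    obtain ⟨t1, ht1⟩ := Filter.eventually_atTop.1
      (hxlim.eventually (eventually_gt_nhds (by linarith : l / 2 < l)))
    set t2 := max t1 0 with ht2def
    have ht20 : 0 ≤ t2 := le_max_right _ _
    have hDl : 0 < D * l := mul_pos hD hl
    set b := t2 + 2 * W t2 / (D * l) + 1 with hbdef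
    clear_value l t2 b
    have hWt2 : 0 ≤ W t2 := hWlb t2 ht20
    have ht2b : t2 ≤ b := by
      have : 0 ≤ 2 * W t2 / (D * l) := by positivity
      simp only [hbdef]; linarith
    have hZ : W b + D * l / 2 * b ≤ W t2 + D * l / 2 * t2 := by
      have := decay_aux (f := fun t => W t + D * l / 2 * t)
        (f' := fun t => -D * x t + D * l / 2 * 1) ht2b
        (fun t ht => (hWd t (le_trans ht20 ht.1)).add ((hasDerivAt_id t).const_mul (D * l / 2)))
        (fun t ht => by
          have hx2 : l / 2 < x t := ht1 t (le_trans (by rw [ht2def]; exact le_max_left _ _) ht.1.le)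
          nlinarith)
      simpa using this
    have hWb : 0 ≤ W b := hWlb b (le_trans ht20 ht2b)
    have hkey : D * l / 2 * (b - t2) = W t2 + D * l / 2 := by
      simp only [hbdef]
      field_simp
      ring
    have hc : 0 < D * l / 2 := by linarith
    have hexpand : D * l / 2 * (b - t2) = D * l / 2 * b - D * l / 2 * t2 := by ring
    linarith [hZ, hkey, hWb, hexpand, hc]
  rw [hl] at hxlim
  exact hxlim


end
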